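/- Let ρ be a density matrix on ℂ^d and let Ψ and Φ be quantum channels on ℂ^d with Kraus operators {L_i}_{i=1}^m and {K_j}_{j=1}^n. Then Ĩ_ρ(Ψ) · J̃_ρ(Φ) ≥ (1/4) Σ_{i,j} |tr([L_i, K_j†] ρ)|², where Ĩ_ρ(Ψ) = I_ρ(Ψ) and J̃_ρ(Φ) = 2·V_ρ(Φ) − I_ρ(Φ). -/

import Mathlib

open Matrix
open scoped ComplexOrder

noncomputable section

/-- Variance of an operator `K` with respect to a state `ρ`:
`V_ρ(K) = ½ tr((K†K + KK†)ρ) − |tr(Kρ)|²`. -/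
def opVar {d : ℕ} (ρ K : Matrix (Fin d) (Fin d) ℂ) : ℝ :=
  (((Kᴴ * K + K * Kᴴ) * ρ).trace).re / 2 - ‖(K * ρ).trace‖ ^ 2

/-- Variance of a channel with Kraus operators `K i`: `V_ρ(Φ) = Σ_i V_ρ(K_i)`. -/
def chanVar {d n : ℕ} (ρ : Matrix (Fin d) (Fin d) ℂ)
    (K : Fin n → Matrix (Fin d) (Fin d) ℂ) : ℝ :=
  ∑ i, opVar ρ (K i)

/-- The PSD square root `U diag(√λ) U*` (the former `Matrix.PosSemidef.sqrt`). -/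
def psdSqrt {d : ℕ} {ρ : Matrix (Fin d) (Fin d) ℂ} (hρ : ρ.PosSemidef) :
    Matrix (Fin d) (Fin d) ℂ :=
  (hρ.1.eigenvectorUnitary : Matrix (Fin d) (Fin d) ℂ) *
    diagonal (fun i => ((Real.sqrt (hρ.1.eigenvalues i) : ℝ) : ℂ)) *
    (star hρ.1.eigenvectorUnitary : Matrix (Fin d) (Fin d) ℂ)

/-- Wigner–Yanase skew information of a channel with Kraus operators `K i`:
`I_ρ(Φ) = ½ Σ_i ‖[√ρ, K_i]‖_F²`, where `√ρ` is the PSD square root of `ρ`. -/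
def chanSkew {d n : ℕ} (ρ : Matrix (Fin d) (Fin d) ℂ) (hρ : ρ.PosSemidef)
    (K : Fin n → Matrix (Fin d) (Fin d) ℂ) : ℝ :=
  (1 / 2) * ∑ i,
    (((psdSqrt hρ * K i - K i * psdSqrt hρ)ᴴ * (psdSqrt hρ * K i - K i * psdSqrt hρ)).trace).re

/-- Quantum uncertainty of a channel:
`Q_ρ(Φ) = √(V_ρ(Φ)² − (V_ρ(Φ) − I_ρ(Φ))²)`. -/
def chanQ {d n : ℕ} (ρ : Matrix (Fin d) (Fin d) ℂ) (hρ : ρ.PosSemidef)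
    (K : Fin n → Matrix (Fin d) (Fin d) ℂ) : ℝ :=
  Real.sqrt ((chanVar ρ K) ^ 2 - (chanVar ρ K - chanSkew ρ hρ K) ^ 2)

namespace Stmt4Aux

variable {d : ℕ}

lemma psdSqrt_herm {ρ : Matrix (Fin d) (Fin d) ℂ} (hρ : ρ.PosSemidef) :
    (psdSqrt hρ)ᴴ = psdSqrt hρ := by
  unfold psdSqrt
  simp only [conjTranspose_mul, diagonal_conjTranspose, Matrix.star_eq_conjTranspose,
    conjTranspose_conjTranspose, mul_assoc]
  have hf : (star fun i => ((Real.sqrt (hρ.1.eigenvalues i) : ℝ) : ℂ))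
      = fun i => ((Real.sqrt (hρ.1.eigenvalues i) : ℝ) : ℂ) := by
    funext i; simp
  rw [hf]

lemma psdSqrt_mul_self {ρ : Matrix (Fin d) (Fin d) ℂ} (hρ : ρ.PosSemidef) :
    psdSqrt hρ * psdSqrt hρ = ρ := by
  have hD : diagonal (fun i => ((Real.sqrt (hρ.1.eigenvalues i) : ℝ) : ℂ)) *
      diagonal (fun i => ((Real.sqrt (hρ.1.eigenvalues i) : ℝ) : ℂ))
      = diagonal (RCLike.ofReal ∘ hρ.1.eigenvalues) := by
    rw [diagonal_mul_diagonal]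
    congr 1; ext i
    simp only [Function.comp_apply]
    rw [← Complex.ofReal_mul, Real.mul_self_sqrt (hρ.eigenvalues_nonneg i)]
    rfl
  conv_rhs => rw [hρ.1.spectral_theorem, Unitary.conjStarAlgAut_apply]
  unfold psdSqrt
  have hU : (star hρ.1.eigenvectorUnitary : Matrix (Fin d) (Fin d) ℂ) *
      (hρ.1.eigenvectorUnitary : Matrix (Fin d) (Fin d) ℂ) = 1 := Unitary.coe_star_mul_self _
  rw [← hD]
  simp only [mul_assoc]
  rw [← mul_assoc (star _ : Matrix (Fin d) (Fin d) ℂ) (hρ.1.eigenvectorUnitary : Matrix (Fin d) (Fin d) ℂ), hU, one_mul]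

lemma rot (A B : Matrix (Fin d) (Fin d) ℂ) : (A * B).trace = (B * A).trace :=
  trace_mul_comm A B

lemma entry_trace (X : Matrix (Fin d) (Fin d) ℂ) :
    ((Xᴴ * X).trace).re = ∑ p, ∑ q, ‖X p q‖ ^ 2 := by
  simp only [Matrix.trace, Matrix.diag, Matrix.mul_apply, Matrix.conjTranspose_apply,
    Complex.re_sum]
  rw [Finset.sum_comm]
  congr 1; ext p; congr 1; ext q
  simp [Complex.sq_norm, Complex.normSq_eq_conj_mul_self, Complex.normSq_apply]

lemma cs_trace (X Y : Matrix (Fin d) (Fin d) ℂ) :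
    ‖(X * Y).trace‖ ^ 2 ≤
      (∑ p, ∑ q, ‖X p q‖ ^ 2) * (∑ p, ∑ q, ‖Y p q‖ ^ 2) := by
  have htr : (X * Y).trace = ∑ z : Fin d × Fin d, X z.1 z.2 * Y z.2 z.1 := by
    simp [Matrix.trace, Matrix.diag, Matrix.mul_apply, Fintype.sum_prod_type]
  have h1 : ‖(X*Y).trace‖ ≤
      ∑ z : Fin d × Fin d, ‖X z.1 z.2‖ * ‖Y z.2 z.1‖ := by
    rw [htr]
    exact (norm_sum_le _ _).trans (le_of_eq (by simp [norm_mul]))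
  calc ‖(X*Y).trace‖ ^ 2
      ≤ (∑ z : Fin d × Fin d, ‖X z.1 z.2‖ * ‖Y z.2 z.1‖) ^ 2 := by
        exact pow_le_pow_left₀ (norm_nonneg _) h1 2
    _ ≤ (∑ z : Fin d × Fin d, ‖X z.1 z.2‖ ^ 2) *
        (∑ z : Fin d × Fin d, ‖Y z.2 z.1‖ ^ 2) :=
        Finset.sum_mul_sq_le_sq_mul_sq _ _ _
    _ = _ := by
        rw [Fintype.sum_prod_type, Fintype.sum_prod_type]
        congr 1
        exact Finset.sum_comm

lemma key1 (s L Kd : Matrix (Fin d) (Fin d) ℂ) (c : ℂ) :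
    ((s * L - L * s) * (s * Kd + Kd * s - c • s)).trace
      = ((L * Kd - Kd * L) * (s * s)).trace := by
  have e1 : (s * (L * (s * Kd))).trace = (L * (s * (Kd * s))).trace := by
    rw [rot]; simp only [mul_assoc]
  have e2 : (s * (L * (Kd * s))).trace = (L * (Kd * (s * s))).trace := by
    rw [rot]; simp only [mul_assoc]
  have e3 : (s * (L * s)).trace = (L * (s * s)).trace := by
    rw [rot]; simp only [mul_assoc]
  have e4 : (Kd * (L * (s * s))).trace = (L * (s * (s * Kd))).trace := by
    rw [rot]; simp only [mul_assoc]
  simp only [sub_mul, mul_add, mul_sub, add_mul, mul_smul_comm, smul_mul_assoc,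
    trace_add, trace_sub, trace_smul, mul_assoc]
  rw [e1, e2, e3, ← e4]
  simp

set_option linter.unreachableTactic false in
set_option linter.unusedTactic false in
lemma key4 (s k : Matrix (Fin d) (Fin d) ℂ) (hs : sᴴ = s) (h9 : (s*s).trace = 1)
    (c : ℂ) (hc : c = 2 * (kᴴ * (s*s)).trace) (hc' : star c = 2 * ((k * (s*s)).trace)) :
    ((s * kᴴ + kᴴ * s - c • s)ᴴ * (s * kᴴ + kᴴ * s - c • s)).trace
      + ((s * k - k * s)ᴴ * (s * k - k * s)).trace
    = 2 * ((kᴴ * (k * (s*s))).trace + (k * (kᴴ * (s*s))).trace)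
      - 4 * ((kᴴ * (s*s)).trace * (k * (s*s)).trace) := by
  have h4 : (s*(k*(s*kᴴ))).trace = (k*(s*(kᴴ*s))).trace := by
    rw [rot]; simp only [mul_assoc]
  have h5 : (s*(k*(kᴴ*s))).trace = (k*(kᴴ*(s*s))).trace := by
    rw [rot]; simp only [mul_assoc]
  have h6 : (s*(k*s)).trace = (k*(s*s)).trace := by
    rw [rot]; simp only [mul_assoc]
  have h7 : (s*(s*kᴴ)).trace = (kᴴ*(s*s)).trace := by
    rw [← mul_assoc, rot]
  have h8 : (s*(kᴴ*s)).trace = (kᴴ*(s*s)).trace := by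
    rw [rot, mul_assoc]
  have hU1 : (kᴴ*(s*(s*k))).trace = (k*(kᴴ*(s*s))).trace := by
    rw [show kᴴ*(s*(s*k)) = kᴴ*(s*s)*k from by simp only [mul_assoc], rot]
  have hU2 : (kᴴ*(s*(k*s))).trace = (k*(s*(kᴴ*s))).trace := by
    rw [show kᴴ*(s*(k*s)) = (kᴴ*s)*(k*s) from by simp only [mul_assoc], rot]
    all_goals simp only [mul_assoc]
  have hU3 : (s*(kᴴ*(s*k))).trace = (k*(s*(kᴴ*s))).trace := by
    rw [show s*(kᴴ*(s*k)) = (s*(kᴴ*s))*k from by simp only [mul_assoc], rot]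
    all_goals simp only [mul_assoc]
  have hU4 : (s*(kᴴ*(k*s))).trace = (k*(s*(s*kᴴ))).trace := by
    rw [show s*(kᴴ*(k*s)) = (s*kᴴ)*(k*s) from by simp only [mul_assoc], rot]
    all_goals simp only [mul_assoc]
  have hR : (kᴴ*(k*(s*s))).trace = (k*(s*(s*kᴴ))).trace := by
    rw [rot]; simp only [mul_assoc]
  simp only [conjTranspose_add, conjTranspose_sub, conjTranspose_mul, conjTranspose_smul,
    conjTranspose_conjTranspose, hs, add_mul, mul_add, sub_mul, mul_sub,
    smul_mul_assoc, mul_smul_comm, smul_smul, trace_add, trace_sub, trace_smul,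
    smul_eq_mul, mul_assoc]
  rw [h4, h5, h6, h7, h8, hU1, hU2, hU3, hU4, hR, h9, hc', hc]
  ring

end Stmt4Aux

open Stmt4Aux in
/-- `Ĩ_ρ(Ψ) · J̃_ρ(Φ) ≥ ¼ Σ_{i,j} |tr([L_i, K_j†] ρ)|²`, where
`Ĩ_ρ = I_ρ` and `J̃_ρ = 2 V_ρ − I_ρ`. -/
theorem stmt_4 {d m n : ℕ}
    (ρ : Matrix (Fin d) (Fin d) ℂ) (hρ : ρ.PosSemidef) (htr : ρ.trace = 1)
    (L : Fin m → Matrix (Fin d) (Fin d) ℂ) (hL : ∑ i, (L i)ᴴ * L i = 1)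
    (K : Fin n → Matrix (Fin d) (Fin d) ℂ) (hK : ∑ j, (K j)ᴴ * K j = 1) :
    chanSkew ρ hρ L * (2 * chanVar ρ K - chanSkew ρ hρ K) ≥
      (1 / 4) * ∑ i, ∑ j,
        ‖((L i * (K j)ᴴ - (K j)ᴴ * L i) * ρ).trace‖ ^ 2 := by
  set s := psdSqrt hρ with hsdef
  have hs : sᴴ = s := psdSqrt_herm hρ
  have hss : s * s = ρ := psdSqrt_mul_self hρ
  have h9 : (s * s).trace = 1 := by rw [hss, htr]
  set A : Fin m → Matrix (Fin d) (Fin d) ℂ := fun i => s * L i - L i * s with hA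
  set B : Fin n → Matrix (Fin d) (Fin d) ℂ := fun j =>
    s * (K j)ᴴ + (K j)ᴴ * s - (2 * ((K j)ᴴ * (s * s)).trace) • s with hB
  set FA : Fin m → ℝ := fun i => ∑ p, ∑ q, ‖A i p q‖ ^ 2 with hFAdef
  set FB : Fin n → ℝ := fun j => ∑ p, ∑ q, ‖B j p q‖ ^ 2 with hFBdef
  -- sum of FA is twice the skew information of L
  have hFA : ∑ i, FA i = 2 * chanSkew ρ hρ L := by
    unfold chanSkew
    rw [← hsdef]
    simp only [hFAdef, ← entry_trace, hA]
    ring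
  -- conjugate trace identity
  have hconj : ∀ j : Fin n, ((K j)ᴴ * (s * s)).trace = star ((K j * (s * s)).trace) := by
    intro j
    rw [← trace_conjTranspose, conjTranspose_mul, conjTranspose_mul, hs, rot]
  -- sum of FB is twice (2 V - I) for K
  have hFB : ∑ j, FB j = 2 * (2 * chanVar ρ K - chanSkew ρ hρ K) := by
    have perj : ∀ j : Fin n, FB j =
        2 * (((K j)ᴴ * K j + K j * (K j)ᴴ) * ρ).trace.re
          - 4 * ‖(K j * ρ).trace‖ ^ 2
          - (((s * K j - K j * s)ᴴ * (s * K j - K j * s)).trace).re := by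
      intro j
      have hkey := key4 s (K j) hs h9 (2 * ((K j)ᴴ * (s * s)).trace) rfl
        (by rw [star_mul', hconj j, star_star]; norm_num)
      have h1 : FB j = (((B j)ᴴ * B j).trace).re := (entry_trace (B j)).symm
      have h2 : ((K j)ᴴ * (K j * (s*s))).trace + (K j * ((K j)ᴴ * (s*s))).trace
          = (((K j)ᴴ * K j + K j * (K j)ᴴ) * ρ).trace := by
        rw [← hss]
        simp only [add_mul, trace_add, mul_assoc]
      have h3 : (((K j)ᴴ * (s*s)).trace * (K j * (s*s)).trace).re
          = ‖(K j * ρ).trace‖ ^ 2 := by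
        rw [hconj j, ← hss, mul_comm, Complex.star_def, Complex.mul_conj]
        simp [Complex.sq_norm]
      have := congrArg Complex.re hkey
      simp only [Complex.add_re, Complex.sub_re, Complex.mul_re] at this
      rw [h1]
      have h2' := congrArg Complex.re h2
      simp only [Complex.add_re] at h2'
      -- assemble from the complex identity
      have hkey' : (((B j)ᴴ * B j).trace)
            + (((s * K j - K j * s)ᴴ * (s * K j - K j * s)).trace)
          = 2 * ((((K j)ᴴ * K j + K j * (K j)ᴴ) * ρ).trace)
            - 4 * ((((K j)ᴴ * (s*s)).trace * (K j * (s*s)).trace)) := by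
        rw [hB]
        rw [hkey, h2]
      have := congrArg Complex.re hkey'
      simp only [Complex.add_re, Complex.sub_re] at this
      rw [show ((2 : ℂ) * ((((K j)ᴴ * K j + K j * (K j)ᴴ) * ρ).trace)).re
          = 2 * (((K j)ᴴ * K j + K j * (K j)ᴴ) * ρ).trace.re from by
        simp [Complex.mul_re]] at this
      rw [show ((4 : ℂ) * ((((K j)ᴴ * (s*s)).trace * (K j * (s*s)).trace))).re
          = 4 * ((((K j)ᴴ * (s*s)).trace * (K j * (s*s)).trace)).re from by
        simp [Complex.mul_re]] at this
      rw [h3] at this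
      linarith
    rw [Finset.sum_congr rfl (fun j _ => perj j)]
    unfold chanVar chanSkew opVar
    rw [← hsdef]
    simp only [Finset.sum_sub_distrib, ← Finset.sum_div, ← Finset.mul_sum]
    ring
  -- per-pair Cauchy-Schwarz
  have per : ∀ (i : Fin m) (j : Fin n),
      ‖((L i * (K j)ᴴ - (K j)ᴴ * L i) * ρ).trace‖ ^ 2 ≤ FA i * FB j := by
    intro i j
    have hid : ((L i * (K j)ᴴ - (K j)ᴴ * L i) * ρ).trace = (A i * B j).trace := by
      rw [← hss, ← key1 s (L i) ((K j)ᴴ) (2 * ((K j)ᴴ * (s * s)).trace)]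
    rw [hid]
    exact cs_trace (A i) (B j)
  rw [ge_iff_le]
  calc (1 / 4) * ∑ i, ∑ j,
        ‖((L i * (K j)ᴴ - (K j)ᴴ * L i) * ρ).trace‖ ^ 2
      ≤ (1 / 4) * ((∑ i, FA i) * (∑ j, FB j)) := by
        rw [Finset.sum_mul_sum]
        have : ∑ i, ∑ j, ‖((L i * (K j)ᴴ - (K j)ᴴ * L i) * ρ).trace‖ ^ 2
            ≤ ∑ i, ∑ j, FA i * FB j :=
          Finset.sum_le_sum fun i _ => Finset.sum_le_sum fun j _ => per i j
        linarith
    _ = chanSkew ρ hρ L * (2 * chanVar ρ K - chanSkew ρ hρ K) := by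
        rw [hFA, hFB]; ring
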